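/- If det P ≠ 0, then all entries of the row vector μ = (μ_p, μ_1, …, μ_{n+1}) satisfying μ·P = (1, 0, …, 0) are nonnegative: μ_p ≥ 0 and μ_i ≥ 0 for every i ∈ {1,…,n+1}. -/

import Mathlib

open Finset

/-- The η×η shift-type block `D^{η−m}` over GF(2): entry (i,j) is 1 iff
`j < m` and `i = j + (η − m)`. -/
def Dblk (η m : ℕ) : Matrix (Fin η) (Fin η) (ZMod 2) :=
  Matrix.of fun i j => if (j : ℕ) < m ∧ (i : ℕ) = (j : ℕ) + (η - m) then 1 else 0

/-- Row-block index set of the transfer matrix: `{d} ∪ (Ωᶜ ∩ Sᶜ)`, with `0`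
playing the role of the destination `d` and relays being `1,…,n`. -/
def rowIdx (n : ℕ) (Ω S : Finset ℕ) : Finset ℕ :=
  insert 0 ((Finset.Icc 1 n \ Ω) \ S)

/-- Column-block index set of the transfer matrix: `{s} ∪ (Ω ∩ S)`, with `0`
playing the role of the source `s`. -/
def colIdx (Ω S : Finset ℕ) : Finset ℕ :=
  insert 0 (Ω ∩ S)

/-- `f(Ω,S)`: rank over GF(2) of the transfer matrix `F_{Ω,S}`, whose block in
row block `i` and column block `j` is `D^{η−ℓ i j}` (here `ℓ i j` encodes
`ℓ_{i,j}`, with index `0` standing for `d` in the first slot and for `s` in the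
second slot). -/
noncomputable def fRank (n η : ℕ) (ℓ : ℕ → ℕ → ℕ) (Ω S : Finset ℕ) : ℕ :=
  Matrix.rank
    (Matrix.of fun (p : ↥(rowIdx n Ω S) × Fin η) (q : ↥(colIdx Ω S) × Fin η) =>
      Dblk η (ℓ (p.1 : ℕ) (q.1 : ℕ)) p.2 q.2)

/-- The `(n+2) × (n+2)` real matrix `P`. -/
noncomputable def Pmat (n η : ℕ) (ℓ : ℕ → ℕ → ℕ) : Matrix (Fin (n+2)) (Fin (n+2)) ℝ :=
  Matrix.of fun i j =>
    if (i : ℕ) = 0 then (if (j : ℕ) = 0 then 0 else 1)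
    else if (j : ℕ) = 0 then 1
    else -(fRank n η ℓ (Finset.Icc (i : ℕ) n)
        (if (j : ℕ) = n + 1 then (∅ : Finset ℕ) else {(j : ℕ)}) : ℝ)

/-- `P̃_i`: determinant of the submatrix of `P` obtained by deleting row `0`
and column `i`. -/
noncomputable def Pminor (n η : ℕ) (ℓ : ℕ → ℕ → ℕ) (i : Fin (n+2)) : ℝ :=
  ((Pmat n η ℓ).submatrix Fin.succ i.succAbove).det

/-- Feasibility for the LP defining the approximate capacity `C^LD`. -/
def FeasLD (n η : ℕ) (ℓ : ℕ → ℕ → ℕ) (t : ℝ) (lam : Finset ℕ → ℝ) : Prop :=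
  (∀ S ⊆ Finset.Icc 1 n, 0 ≤ lam S) ∧
  (∑ S ∈ (Finset.Icc 1 n).powerset, lam S) ≤ 1 ∧
  ∀ Ω ⊆ Finset.Icc 1 n,
    t ≤ ∑ S ∈ (Finset.Icc 1 n).powerset, lam S * (fRank n η ℓ Ω S : ℝ)

/-- The approximate capacity `C^LD`. -/
noncomputable def CLD (n η : ℕ) (ℓ : ℕ → ℕ → ℕ) : ℝ :=
  sSup {t : ℝ | ∃ lam, FeasLD n η ℓ t lam}

/-- Feasibility for the relaxed LP defining `C^U`. -/
def FeasU (n η : ℕ) (ℓ : ℕ → ℕ → ℕ) (t : ℝ) (lam : Finset ℕ → ℝ) : Prop :=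
  (∀ S ⊆ Finset.Icc 1 n, 0 ≤ lam S) ∧
  (∑ S ∈ (Finset.Icc 1 n).powerset, lam S) ≤ 1 ∧
  ∀ i ∈ Finset.Icc 1 (n+1),
    t ≤ ∑ S ∈ (Finset.Icc 1 n).powerset, lam S * (fRank n η ℓ (Finset.Icc i n) S : ℝ)

/-- The relaxed value `C^U`. -/
noncomputable def CU (n η : ℕ) (ℓ : ℕ → ℕ → ℕ) : ℝ :=
  sSup {t : ℝ | ∃ lam, FeasU n η ℓ t lam}

/-- The set `Ŝ = {∅, {1}, …, {n}}` of states with at most one relay transmitting. -/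
def SHat (n : ℕ) : Finset (Finset ℕ) :=
  insert ∅ ((Finset.Icc 1 n).image fun i => {i})

open Fin.NatCast in
/-- The schedule `λ*` induced by a solution vector `v = (t*, λ*_{{1}}, …, λ*_{{n}}, λ*_∅)`
of the linear system `P·v = e₀`: it assigns `v i` to the state `{i}` (for `i ∈ [n]`),
`v (n+1)` to `∅`, and `0` to any other state. -/
noncomputable def lamStar (n : ℕ) (v : Fin (n+2) → ℝ) (S : Finset ℕ) : ℝ :=
  (if S = ∅ then v (Fin.last (n+1)) else 0) +
  ∑ i ∈ Finset.Icc 1 n, if S = {i} then v (i : Fin (n+2)) else 0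


lemma rank_submatrix_le' {R : Type*} [Field R] {m n m' n' : Type*}
    [Fintype m] [Fintype n] [Fintype m'] [Fintype n'] [DecidableEq m] [DecidableEq n]
    (B : Matrix m n R) (g : m' → m) (f : n' → n) :
    (B.submatrix g f).rank ≤ B.rank := by
  have h : B.submatrix g f =
      (Matrix.of fun (p' : m') (p : m) => if g p' = p then (1:R) else 0) * B *
      (Matrix.of fun (y : n) (q' : n') => if y = f q' then (1:R) else 0) := by
    ext p' q'
    simp [Matrix.mul_apply, ite_mul, mul_ite, Finset.sum_ite_eq, Finset.sum_ite_eq']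
  rw [h]
  exact le_trans (Matrix.rank_mul_le_left _ _) (Matrix.rank_mul_le_right _ _)

lemma rank_stack (η : ℕ) (T : Finset ℕ) (hT : T.Nonempty) (m : ℕ → ℕ)
    (hm : ∀ k ∈ T, m k ≤ η) :
    (Matrix.of fun (p : ↥T × Fin η) (y : Fin η) => Dblk η (m (p.1 : ℕ)) p.2 y).rank
      = T.sup m := by
  set M : Matrix (↥T × Fin η) (Fin η) (ZMod 2) :=
    Matrix.of fun (p : ↥T × Fin η) (y : Fin η) => Dblk η (m (p.1 : ℕ)) p.2 y with hM
  have hsη : T.sup m ≤ η := Finset.sup_le hm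
  apply le_antisymm
  · -- upper bound
    set s := T.sup m
    have hfac : M = (M.submatrix id (Fin.castLE hsη)) *
        (Matrix.of fun (t : Fin s) (y : Fin η) => if (y : ℕ) = (t : ℕ) then (1:ZMod 2) else 0) := by
      ext p y
      rw [Matrix.mul_apply]
      by_cases hy : (y : ℕ) < s
      · rw [Finset.sum_eq_single (⟨(y:ℕ), hy⟩ : Fin s)]
        · simp only [Matrix.of_apply, Matrix.submatrix_apply, id_eq]
          have : Fin.castLE hsη ⟨(y:ℕ), hy⟩ = y := by ext; simp
          rw [this]; simp
        · intro t _ ht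
          have : ¬ ((y:ℕ) = (t:ℕ)) := by
            intro h; apply ht; ext; simp [← h]
          simp [this]
        · intro h; exact absurd (Finset.mem_univ _) h
      · have h1 : M p y = 0 := by
          have : ¬ ((y:ℕ) < m (p.1 : ℕ)) := by
            intro h; exact hy (lt_of_lt_of_le h (Finset.le_sup p.1.2))
          simp [hM, Dblk, this]
        rw [h1]
        symm
        apply Finset.sum_eq_zero
        intro t _
        have : ¬ ((y:ℕ) = (t:ℕ)) := by
          intro h; exact hy (h ▸ t.2)
        simp [this]
    calc M.rank ≤ _ := by rw [hfac]; exact Matrix.rank_mul_le_right _ _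
    _ ≤ Fintype.card (Fin s) := Matrix.rank_le_card_height _
    _ = s := Fintype.card_fin s
  · -- lower bound
    obtain ⟨k₀, hk₀T, hk₀⟩ := Finset.exists_mem_eq_sup T hT m
    have hs₀η : m k₀ ≤ η := hm k₀ hk₀T
    set s₀ := m k₀ with hs₀
    have hsub : M.submatrix
        (fun t : Fin s₀ => ((⟨k₀, hk₀T⟩, ⟨(t:ℕ) + (η - s₀), by omega⟩) : ↥T × Fin η))
        (fun t : Fin s₀ => (⟨(t:ℕ), by omega⟩ : Fin η)) = (1 : Matrix (Fin s₀) (Fin s₀) (ZMod 2)) := by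
      ext t u
      simp only [Matrix.submatrix_apply, hM, Matrix.of_apply, Dblk, Matrix.one_apply]
      have hu : (u : ℕ) < s₀ := u.2
      by_cases h : t = u
      · subst h; simp [hu]; exact ⟨hu, rfl⟩
      · have : ¬ ((t:ℕ) + (η - s₀) = (u:ℕ) + (η - s₀)) := by
          intro hh
          exact h (by ext; omega)
        simp [this, h]; exact fun _ => this
    rw [hk₀]
    calc s₀ = Fintype.card (Fin s₀) := (Fintype.card_fin s₀).symm
    _ = (1 : Matrix (Fin s₀) (Fin s₀) (ZMod 2)).rank := Matrix.rank_one.symm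
    _ = _ := by rw [← hsub]
    _ ≤ M.rank := rank_submatrix_le' _ _ _

lemma fRank_mono (n η : ℕ) (ℓ : ℕ → ℕ → ℕ) (Ω S Ω' S' : Finset ℕ)
    (hrow : ∀ k ∈ rowIdx n Ω S, k ∈ rowIdx n Ω' S')
    (hcol : ∀ k ∈ colIdx Ω S, k ∈ colIdx Ω' S') :
    fRank n η ℓ Ω S ≤ fRank n η ℓ Ω' S' := by
  unfold fRank
  have : (Matrix.of fun (p : ↥(rowIdx n Ω S) × Fin η) (q : ↥(colIdx Ω S) × Fin η) =>
      Dblk η (ℓ (p.1 : ℕ) (q.1 : ℕ)) p.2 q.2) =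
    (Matrix.of fun (p : ↥(rowIdx n Ω' S') × Fin η) (q : ↥(colIdx Ω' S') × Fin η) =>
      Dblk η (ℓ (p.1 : ℕ) (q.1 : ℕ)) p.2 q.2).submatrix
      (fun p => (⟨(p.1 : ℕ), hrow _ p.1.2⟩, p.2))
      (fun q => (⟨(q.1 : ℕ), hcol _ q.1.2⟩, q.2)) := by
    ext p q; rfl
  rw [this]
  exact rank_submatrix_le' _ _ _

lemma fRank_eq_sup (n η : ℕ) (ℓ : ℕ → ℕ → ℕ) (Ω S : Finset ℕ) (hΩS : Ω ∩ S = ∅)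
    (hm : ∀ k ∈ rowIdx n Ω S, ℓ k 0 ≤ η) :
    fRank n η ℓ Ω S = (rowIdx n Ω S).sup (fun k => ℓ k 0) := by
  have hcol : colIdx Ω S = {0} := by
    rw [colIdx, hΩS]; rfl
  have h0 : (0:ℕ) ∈ colIdx Ω S := Finset.mem_insert_self _ _
  set T := rowIdx n Ω S
  set A : Matrix (↥T × Fin η) (↥(colIdx Ω S) × Fin η) (ZMod 2) :=
    Matrix.of fun p q => Dblk η (ℓ (p.1 : ℕ) (q.1 : ℕ)) p.2 q.2 with hA
  set M : Matrix (↥T × Fin η) (Fin η) (ZMod 2) :=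
    Matrix.of fun p y => Dblk η (ℓ (p.1 : ℕ) 0) p.2 y with hMdef
  have hTne : T.Nonempty := ⟨0, Finset.mem_insert_self _ _⟩
  have hrank : A.rank = M.rank := by
    apply le_antisymm
    · have : A = M.submatrix id (fun q => q.2) := by
        ext p q
        have hq : (q.1 : ℕ) = 0 := by
          have h' : (q.1 : ℕ) ∈ ({0} : Finset ℕ) := by rw [← hcol]; exact q.1.2
          exact Finset.mem_singleton.mp h'
        simp [hA, hMdef, hq]
      rw [this]
      exact rank_submatrix_le' _ _ _
    · have : M = A.submatrix id (fun y => (⟨0, h0⟩, y)) := by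
        ext p y; rfl
      rw [this]
      exact rank_submatrix_le' _ _ _
  show A.rank = _
  rw [hrank]
  exact rank_stack η T hTne (fun k => ℓ k 0) hm

section facts
variable (n η : ℕ) (ℓ : ℕ → ℕ → ℕ)

-- R3 : column monotonicity
lemma fact_R3 (i j : ℕ) (hi : 1 ≤ i) (hij : i ≤ j) (hj : j ≤ n) :
    fRank n η ℓ (Finset.Icc i n) ∅ ≤ fRank n η ℓ (Finset.Icc i n) {j} := by
  apply fRank_mono
  · intro k hk
    unfold rowIdx at hk ⊢
    rw [Finset.sdiff_empty] at hk
    rcases Finset.mem_insert.mp hk with h | h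
    · exact Finset.mem_insert.mpr (Or.inl h)
    · refine Finset.mem_insert.mpr (Or.inr (Finset.mem_sdiff.mpr ⟨h, ?_⟩))
      rw [Finset.mem_singleton]
      rintro rfl
      exact (Finset.mem_sdiff.mp h).2 (Finset.mem_Icc.mpr ⟨hij, hj⟩)
  · intro k hk
    simp only [colIdx, Finset.mem_insert, Finset.mem_inter, Finset.notMem_empty,
      and_false, or_false] at hk
    exact Finset.mem_insert.mpr (Or.inl hk)

-- R2 : row monotonicity at the diagonal
lemma fact_R2 (j : ℕ) (hj1 : 1 ≤ j) (hj : j ≤ n) :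
    fRank n η ℓ (Finset.Icc (j+1) n) {j} ≤ fRank n η ℓ (Finset.Icc (j+1) n) ∅ := by
  apply fRank_mono
  · intro k hk
    unfold rowIdx at hk ⊢
    rw [Finset.sdiff_empty]
    rcases Finset.mem_insert.mp hk with h | h
    · exact Finset.mem_insert.mpr (Or.inl h)
    · exact Finset.mem_insert.mpr (Or.inr (Finset.mem_sdiff.mp h).1)
  · intro k hk
    simp only [colIdx, Finset.mem_insert, Finset.mem_inter, Finset.mem_Icc,
      Finset.mem_singleton] at hk
    rcases hk with h | ⟨⟨h1, -⟩, h2⟩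
    · exact Finset.mem_insert.mpr (Or.inl h)
    · omega

-- R1 : for j ≤ i - 2 the singleton column equals the empty column
lemma fact_R1 (hds : ℓ 0 0 = 0)
    (hbound : ∀ i ≤ n, ∀ j ≤ n, ℓ i j ≤ η)
    (hmono : ∀ i j, 1 ≤ i → i ≤ j → j ≤ n → ℓ i 0 ≤ ℓ j 0)
    (i j : ℕ) (hj1 : 1 ≤ j) (hji : j + 2 ≤ i) (hin : i ≤ n + 1) :
    fRank n η ℓ (Finset.Icc i n) {j} = fRank n η ℓ (Finset.Icc i n) ∅ := by
  have hmrow : ∀ (S : Finset ℕ), ∀ k ∈ rowIdx n (Finset.Icc i n) S, ℓ k 0 ≤ η := by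
    intro S k hk
    simp only [rowIdx, Finset.mem_insert, Finset.mem_sdiff, Finset.mem_Icc] at hk
    rcases hk with h | ⟨⟨⟨-, h2⟩, -⟩, -⟩
    · subst h; exact hbound 0 (Nat.zero_le n) 0 (Nat.zero_le n)
    · exact hbound k h2 0 (Nat.zero_le n)
  have hsup : ∀ (S : Finset ℕ), (∀ k ∈ S, k < i - 1) →
      (rowIdx n (Finset.Icc i n) S).sup (fun k => ℓ k 0) = ℓ (i-1) 0 := by
    intro S hS
    apply le_antisymm
    · apply Finset.sup_le
      intro k hk
      simp only [rowIdx, Finset.mem_insert, Finset.mem_sdiff, Finset.mem_Icc] at hk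
      rcases hk with h | ⟨⟨⟨h1, h2⟩, h3⟩, -⟩
      · subst h; rw [hds]; exact Nat.zero_le _
      · have hki : ¬ (i ≤ k ∧ k ≤ n) := h3
        exact hmono k (i-1) h1 (by omega) (by omega)
    · apply Finset.le_sup (f := fun k => ℓ k 0)
      simp only [rowIdx, Finset.mem_insert, Finset.mem_sdiff, Finset.mem_Icc]
      refine Or.inr ⟨⟨⟨by omega, by omega⟩, by omega⟩, ?_⟩
      intro hmem
      exact absurd (hS _ hmem) (by omega)
  rw [fRank_eq_sup n η ℓ _ _ (by ext k; simp [Finset.mem_Icc]; omega) (hmrow {j}),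
      fRank_eq_sup n η ℓ _ _ (Finset.inter_empty _) (hmrow ∅),
      hsup {j} (by intro k hk; simp at hk; omega),
      hsup ∅ (by intro k hk; simp at hk)]
end facts

def Rho (r : ℕ → ℕ → ℝ) (j : ℕ) (w : ℕ → ℝ) : ℝ := ∑ i ∈ Finset.Icc 1 j, w i * r i j

def Lw (r : ℕ → ℕ → ℝ) (δ : ℕ → ℝ) (j : ℕ) (w : ℕ → ℝ) : ℝ :=
  Rho r j w - δ j * w (j+1)

lemma Rho_congr (r : ℕ → ℕ → ℝ) (j : ℕ) (w w' : ℕ → ℝ)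
    (h : ∀ i, i ≤ j → w i = w' i) : Rho r j w = Rho r j w' := by
  unfold Rho
  refine Finset.sum_congr rfl fun i hi => ?_
  rw [h i (Finset.mem_Icc.mp hi).2]

lemma Lw_congr (r : ℕ → ℕ → ℝ) (δ : ℕ → ℝ) (j : ℕ) (w w' : ℕ → ℝ)
    (h : ∀ i, i ≤ j + 1 → w i = w' i) : Lw r δ j w = Lw r δ j w' := by
  unfold Lw
  rw [Rho_congr r j w w' (fun i hi => h i (by omega)), h (j+1) le_rfl]

lemma Rho_lin (r : ℕ → ℕ → ℝ) (j : ℕ) (a b : ℝ) (u u' : ℕ → ℝ) :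
    Rho r j (fun i => a * u i + b * u' i) = a * Rho r j u + b * Rho r j u' := by
  unfold Rho
  rw [Finset.mul_sum, Finset.mul_sum, ← Finset.sum_add_distrib]
  refine Finset.sum_congr rfl fun i _ => by ring

lemma Lw_lin (r : ℕ → ℕ → ℝ) (δ : ℕ → ℝ) (j : ℕ) (a b : ℝ) (u u' : ℕ → ℝ) :
    Lw r δ j (fun i => a * u i + b * u' i) = a * Lw r δ j u + b * Lw r δ j u' := by
  unfold Lw
  rw [Rho_lin]
  ring

lemma key_ind (N : ℕ) (r : ℕ → ℕ → ℝ) (δ : ℕ → ℝ)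
    (hr : ∀ i j, 1 ≤ i → i ≤ j → j ≤ N → 0 ≤ r i j)
    (hδ : ∀ j, 1 ≤ j → j ≤ N → 0 ≤ δ j) :
    ∀ t, t ≤ N →
    (∃ v : ℕ → ℝ, (∀ i, 0 ≤ v i) ∧ (∃ i, v i ≠ 0) ∧ (∀ i, i = 0 ∨ t + 2 ≤ i → v i = 0) ∧
      (∀ j, 1 ≤ j → j ≤ t → Lw r δ j v = 0) ∧
      (∀ w : ℕ → ℝ, (∀ i, i = 0 ∨ t + 2 ≤ i → w i = 0) →
        (∀ j, 1 ≤ j → j ≤ t → Lw r δ j w = 0) → ∃ c : ℝ, ∀ i, w i = c * v i))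
    ∨ (∃ u u' : ℕ → ℝ, (∀ i, i = 0 ∨ t + 2 ≤ i → u i = 0) ∧
        (∀ i, i = 0 ∨ t + 2 ≤ i → u' i = 0) ∧
        (∀ j, 1 ≤ j → j ≤ t → Lw r δ j u = 0) ∧ (∀ j, 1 ≤ j → j ≤ t → Lw r δ j u' = 0) ∧
        (∃ i, u i ≠ 0) ∧ (∀ c : ℝ, ∃ i, u' i ≠ c * u i)) := by
  intro t
  induction t with
  | zero =>
    intro _
    left
    refine ⟨fun i => if i = 1 then 1 else 0, ?_, ⟨1, by simp⟩, ?_, ?_, ?_⟩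
    · intro i; dsimp only; split <;> norm_num
    · intro i hi; have : i ≠ 1 := by omega
      simp [this]
    · intro j hj1 hj0; omega
    · intro w hsupp _
      refine ⟨w 1, fun i => ?_⟩
      by_cases hi : i = 1
      · subst hi; simp
      · have : w i = 0 := hsupp i (by omega)
        simp [this, hi]
  | succ t IH =>
    intro htN
    have htN' : t ≤ N := by omega
    -- the indicator vector of t+2
    set e : ℕ → ℝ := (fun i => if i = t + 2 then (1:ℝ) else 0) with he
    have he_supp : ∀ i, i = 0 ∨ t + 3 ≤ i → e i = 0 := by
      intro i hi; have : i ≠ t + 2 := by omega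
      simp [he, this]
    have heL : ∀ j, 1 ≤ j → j ≤ t → Lw r δ j e = 0 := by
      intro j hj1 hjt
      unfold Lw
      have h1 : Rho r j e = 0 := by
        apply Finset.sum_eq_zero
        intro i hi
        have : i ≠ t + 2 := by have := (Finset.mem_Icc.mp hi).2; omega
        simp [he, this]
      have h2 : e (j+1) = 0 := by
        have : j + 1 ≠ t + 2 := by omega
        simp [he, this]; omega
      rw [h1, h2]; ring
    have hD : 0 ≤ δ (t+1) := hδ (t+1) (by omega) htN
    rcases IH htN' with ⟨v, hv0, hvne, hvsupp, hvL, hvuniq⟩ | ⟨u, u', hsu, hsu', hLu, hLu', hune, hind⟩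
    · -- case A
      have hρv : 0 ≤ Rho r (t+1) v := by
        apply Finset.sum_nonneg
        intro i hi
        have hi' := Finset.mem_Icc.mp hi
        exact mul_nonneg (hv0 i) (hr i (t+1) hi'.1 hi'.2 htN)
      rcases lt_or_eq_of_le hD with hDpos | hD0
      · -- δ (t+1) > 0 : extend v
        left
        set v' : ℕ → ℝ := fun i => if i = t + 2 then Rho r (t+1) v / δ (t+1) else v i with hv'
        have hv'v : ∀ i, i ≤ t + 1 → v' i = v i := by
          intro i hi; have : i ≠ t + 2 := by omega
          simp [hv', this]
        refine ⟨v', ?_, ?_, ?_, ?_, ?_⟩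
        · intro i; simp only [hv']; split
          · exact div_nonneg hρv (le_of_lt hDpos)
          · exact hv0 i
        · obtain ⟨i, hi⟩ := hvne
          have hi2 : i ≠ t + 2 := fun h => hi (hvsupp i (by omega))
          exact ⟨i, by simp [hv', hi2]; exact hi⟩
        · intro i hi
          rcases hi with hi | hi
          · subst hi; simp [hv']; exact hvsupp 0 (Or.inl rfl)
          · have : i ≠ t + 2 := by omega
            simp [hv', this]; exact hvsupp i (by omega)
        · intro j hj1 hjt
          rcases Nat.lt_or_ge j (t+1) with hj | hj
          · rw [Lw_congr r δ j v' v (fun i hi => hv'v i (by omega))]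
            exact hvL j hj1 (by omega)
          · have hjeq : j = t + 1 := by omega
            subst hjeq
            unfold Lw
            rw [Rho_congr r (t+1) v' v (fun i hi => hv'v i hi)]
            have : v' (t+2) = Rho r (t+1) v / δ (t+1) := by simp [hv']
            rw [this, mul_div_cancel₀ _ (ne_of_gt hDpos)]
            ring
        · intro w hwsupp hwL
          set w₀ : ℕ → ℝ := fun i => if i = t + 2 then 0 else w i with hw₀
          have hw₀w : ∀ i, i ≤ t + 1 → w₀ i = w i := by
            intro i hi; have : i ≠ t + 2 := by omega
            simp [hw₀, this]
          obtain ⟨c, hc⟩ := hvuniq w₀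
            (by intro i hi
                rcases hi with hi | hi
                · subst hi; simp [hw₀]; exact hwsupp 0 (Or.inl rfl)
                · by_cases h2 : i = t + 2
                  · simp [hw₀, h2]
                  · simp [hw₀, h2]; exact hwsupp i (by omega))
            (by intro j hj1 hjt
                rw [Lw_congr r δ j w₀ w (fun i hi => hw₀w i (by omega))]
                exact hwL j hj1 (by omega))
          refine ⟨c, fun i => ?_⟩
          by_cases hi : i = t + 2
          · subst hi
            have hL := hwL (t+1) (by omega) le_rfl
            unfold Lw at hL
            have hρw : Rho r (t+1) w = c * Rho r (t+1) v := by
              rw [← Rho_congr r (t+1) w₀ w (fun i hi => hw₀w i hi)]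
              unfold Rho
              rw [Finset.mul_sum]
              refine Finset.sum_congr rfl fun i _ => by rw [hc i]; ring
            have hv't2 : v' (t+2) = Rho r (t+1) v / δ (t+1) := by simp [hv']
            rw [hρw] at hL
            rw [hv't2]
            field_simp at hL ⊢
            linarith
          · have h1 : v' i = v i := by simp [hv', hi]
            have h2 : w i = w₀ i := by simp [hw₀, hi]
            rw [h2, hc i, h1]
      · -- δ (t+1) = 0
        rcases eq_or_lt_of_le hρv with hρ0 | hρpos
        · -- ρ v = 0 : two kernel vectors
          right
          refine ⟨v, e, ?_, he_supp, ?_, ?_, hvne, ?_⟩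
          · intro i hi; exact hvsupp i (by omega)
          · intro j hj1 hjt
            rcases Nat.lt_or_ge j (t+1) with hj | hj
            · exact hvL j hj1 (by omega)
            · have : j = t + 1 := by omega
              subst this
              unfold Lw
              rw [← hρ0, ← hD0]
              ring
          · intro j hj1 hjt
            rcases Nat.lt_or_ge j (t+1) with hj | hj
            · exact heL j hj1 (by omega)
            · have : j = t + 1 := by omega
              subst this
              unfold Lw
              have h1 : Rho r (t+1) e = 0 := by
                apply Finset.sum_eq_zero
                intro i hi
                have : i ≠ t + 2 := by have := (Finset.mem_Icc.mp hi).2; omega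
                simp [he, this]
              rw [h1, ← hD0]; ring
          · intro c
            refine ⟨t + 2, ?_⟩
            have h1 : e (t+2) = 1 := by simp [he]
            have h2 : v (t+2) = 0 := hvsupp (t+2) (by omega)
            rw [h1, h2]; norm_num
        · -- ρ v > 0 : v collapses, e is the new ray
          left
          refine ⟨e, ?_, ⟨t+2, by simp [he]⟩, he_supp, ?_, ?_⟩
          · intro i; simp only [he]; split <;> norm_num
          · intro j hj1 hjt
            rcases Nat.lt_or_ge j (t+1) with hj | hj
            · exact heL j hj1 (by omega)
            · have : j = t + 1 := by omega
              subst this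
              unfold Lw
              have h1 : Rho r (t+1) e = 0 := by
                apply Finset.sum_eq_zero
                intro i hi
                have : i ≠ t + 2 := by have := (Finset.mem_Icc.mp hi).2; omega
                simp [he, this]
              rw [h1, ← hD0]; ring
          · intro w hwsupp hwL
            set w₀ : ℕ → ℝ := fun i => if i = t + 2 then 0 else w i with hw₀
            have hw₀w : ∀ i, i ≤ t + 1 → w₀ i = w i := by
              intro i hi; have : i ≠ t + 2 := by omega
              simp [hw₀, this]
            obtain ⟨c, hc⟩ := hvuniq w₀
              (by intro i hi
                  rcases hi with hi | hi
                  · subst hi; simp [hw₀]; exact hwsupp 0 (Or.inl rfl)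
                  · by_cases h2 : i = t + 2
                    · simp [hw₀, h2]
                    · simp [hw₀, h2]; exact hwsupp i (by omega))
              (by intro j hj1 hjt
                  rw [Lw_congr r δ j w₀ w (fun i hi => hw₀w i (by omega))]
                  exact hwL j hj1 (by omega))
            have hc0 : c = 0 := by
              have hL := hwL (t+1) (by omega) le_rfl
              unfold Lw at hL
              have hρw : Rho r (t+1) w = c * Rho r (t+1) v := by
                rw [← Rho_congr r (t+1) w₀ w (fun i hi => hw₀w i hi)]
                unfold Rho
                rw [Finset.mul_sum]
                refine Finset.sum_congr rfl fun i _ => by rw [hc i]; ring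
              rw [hρw, ← hD0] at hL
              have : c * Rho r (t+1) v = 0 := by linarith
              rcases mul_eq_zero.mp this with h | h
              · exact h
              · exact absurd h (ne_of_gt hρpos)
            refine ⟨w (t+2), fun i => ?_⟩
            by_cases hi : i = t + 2
            · subst hi; simp [he]
            · have h1 : w i = w₀ i := by simp [hw₀, hi]
              have h2 : e i = 0 := by simp [he, hi]
              rw [h1, hc i, hc0, h2]; ring
    · -- case B
      rcases lt_or_eq_of_le hD with hDpos | hD0
      · -- δ (t+1) > 0 : extend both kernel vectors
        right
        set ext : (ℕ → ℝ) → (ℕ → ℝ) :=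
          fun z i => if i = t + 2 then Rho r (t+1) z / δ (t+1) else z i with hext
        have hext_eq : ∀ z : ℕ → ℝ, ∀ i, i ≠ t + 2 → ext z i = z i := by
          intro z i hi; simp [hext, hi]
        have hext_supp : ∀ z : ℕ → ℝ, (∀ i, i = 0 ∨ t + 2 ≤ i → z i = 0) →
            ∀ i, i = 0 ∨ t + 3 ≤ i → ext z i = 0 := by
          intro z hz i hi
          have h2 : i ≠ t + 2 := by omega
          rw [hext_eq z i h2]
          exact hz i (by omega)
        have hext_L : ∀ z : ℕ → ℝ, (∀ j, 1 ≤ j → j ≤ t → Lw r δ j z = 0) →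
            ∀ j, 1 ≤ j → j ≤ t + 1 → Lw r δ j (ext z) = 0 := by
          intro z hz j hj1 hjt
          rcases Nat.lt_or_ge j (t+1) with hj | hj
          · rw [Lw_congr r δ j (ext z) z (fun i hi => hext_eq z i (by omega))]
            exact hz j hj1 (by omega)
          · have : j = t + 1 := by omega
            subst this
            unfold Lw
            rw [Rho_congr r (t+1) (ext z) z (fun i hi => hext_eq z i (by omega))]
            have h3 : ext z (t+2) = Rho r (t+1) z / δ (t+1) := by simp [hext]
            rw [h3, mul_div_cancel₀ _ (ne_of_gt hDpos)]
            ring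
        refine ⟨ext u, ext u', hext_supp u hsu, hext_supp u' hsu',
          hext_L u hLu, hext_L u' hLu', ?_, ?_⟩
        · obtain ⟨i, hi⟩ := hune
          have h2 : i ≠ t + 2 := fun h => hi (hsu i (by omega))
          exact ⟨i, by rw [hext_eq u i h2]; exact hi⟩
        · intro c
          obtain ⟨i, hi⟩ := hind c
          have h2 : i ≠ t + 2 := by
            intro h
            apply hi
            rw [hsu' i (by omega), hsu i (by omega)]
            ring
          exact ⟨i, by rw [hext_eq u' i h2, hext_eq u i h2]; exact hi⟩
      · -- δ (t+1) = 0
        right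
        have hRhoe : Rho r (t+1) e = 0 := by
          apply Finset.sum_eq_zero
          intro i hi
          have : i ≠ t + 2 := by have := (Finset.mem_Icc.mp hi).2; omega
          simp [he, this]
        have heL' : ∀ j, 1 ≤ j → j ≤ t + 1 → Lw r δ j e = 0 := by
          intro j hj1 hjt
          rcases Nat.lt_or_ge j (t+1) with hj | hj
          · exact heL j hj1 (by omega)
          · have : j = t + 1 := by omega
            subst this
            unfold Lw
            rw [hRhoe, ← hD0]; ring
        by_cases hρu : Rho r (t+1) u = 0
        · -- u is still in the kernel
          refine ⟨u, e, (fun i hi => hsu i (by omega)), he_supp, ?_, heL', hune, ?_⟩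
          · intro j hj1 hjt
            rcases Nat.lt_or_ge j (t+1) with hj | hj
            · exact hLu j hj1 (by omega)
            · have : j = t + 1 := by omega
              subst this
              unfold Lw
              rw [hρu, ← hD0]; ring
          · intro c
            refine ⟨t + 2, ?_⟩
            have h1 : e (t+2) = 1 := by simp [he]
            have h2 : u (t+2) = 0 := hsu (t+2) (by omega)
            rw [h1, h2]; norm_num
        · -- combine u and u'
          set z : ℕ → ℝ := fun i => Rho r (t+1) u * u' i + (- Rho r (t+1) u') * u i with hz
          have hz_supp : ∀ i, i = 0 ∨ t + 3 ≤ i → z i = 0 := by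
            intro i hi
            simp only [hz]
            rw [hsu i (by omega), hsu' i (by omega)]
            ring
          have hz_supp2 : ∀ i, i = 0 ∨ t + 2 ≤ i → z i = 0 := by
            intro i hi
            simp only [hz]
            rw [hsu i (by omega), hsu' i (by omega)]
            ring
          have hzL : ∀ j, 1 ≤ j → j ≤ t + 1 → Lw r δ j z = 0 := by
            intro j hj1 hjt
            rcases Nat.lt_or_ge j (t+1) with hj | hj
            · rw [hz, Lw_lin, hLu' j hj1 (by omega), hLu j hj1 (by omega)]
              ring
            · have : j = t + 1 := by omega
              subst this
              unfold Lw
              have h1 : Rho r (t+1) z = 0 := by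
                rw [hz, Rho_lin]
                ring
              rw [h1, ← hD0, hz_supp2 (t+2) (by omega)]
              ring
          have hzne : ∃ i, z i ≠ 0 := by
            obtain ⟨i, hi⟩ := hind (Rho r (t+1) u' / Rho r (t+1) u)
            refine ⟨i, ?_⟩
            intro h
            apply hi
            simp only [hz] at h
            have : Rho r (t+1) u * u' i = Rho r (t+1) u' * u i := by linarith
            field_simp
            linarith [this]
          refine ⟨z, e, hz_supp, he_supp, hzL, heL', hzne, ?_⟩
          · intro c
            refine ⟨t + 2, ?_⟩
            have h1 : e (t+2) = 1 := by simp [he]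
            have h2 : z (t+2) = 0 := hz_supp2 (t+2) (by omega)
            rw [h1, h2]; norm_num

lemma key (N : ℕ) (r : ℕ → ℕ → ℝ) (δ : ℕ → ℝ)
    (hr : ∀ i j, 1 ≤ i → i ≤ j → j ≤ N → 0 ≤ r i j)
    (hδ : ∀ j, 1 ≤ j → j ≤ N → 0 ≤ δ j)
    (ν : ℕ → ℝ)
    (hsupp : ∀ i, i = 0 ∨ N + 2 ≤ i → ν i = 0)
    (hsum : ∑ i ∈ Finset.Icc 1 (N+1), ν i = 1)
    (hLν : ∀ j, 1 ≤ j → j ≤ N → Lw r δ j ν = 0)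
    (huniq : ∀ w : ℕ → ℝ, (∀ i, i = 0 ∨ N + 2 ≤ i → w i = 0) →
       (∑ i ∈ Finset.Icc 1 (N+1), w i = 0) →
       (∀ j, 1 ≤ j → j ≤ N → Lw r δ j w = 0) → ∀ i, w i = 0) :
    ∀ i, 0 ≤ ν i := by
  rcases key_ind N r δ hr hδ N le_rfl with
    ⟨v, hv0, hvne, hvsupp, hvL, hvuniq⟩ | ⟨u, u', hsu, hsu', hLu, hLu', hune, hind⟩
  · obtain ⟨c, hc⟩ := hvuniq ν hsupp hLν
    have hSv : 0 < ∑ i ∈ Finset.Icc 1 (N+1), v i := by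
      obtain ⟨i0, hi0⟩ := hvne
      have hi0mem : i0 ∈ Finset.Icc 1 (N+1) := by
        rw [Finset.mem_Icc]
        by_contra h
        exact hi0 (hvsupp i0 (by omega))
      have h1 : 0 < v i0 := lt_of_le_of_ne (hv0 i0) (Ne.symm hi0)
      calc (0:ℝ) < v i0 := h1
      _ ≤ ∑ i ∈ Finset.Icc 1 (N+1), v i :=
        Finset.single_le_sum (fun i _ => hv0 i) hi0mem
    have hcS : c * (∑ i ∈ Finset.Icc 1 (N+1), v i) = 1 := by
      rw [Finset.mul_sum, ← hsum]
      exact Finset.sum_congr rfl fun i _ => (hc i).symm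
    have hc0 : 0 < c := by nlinarith
    intro i
    rw [hc i]
    exact mul_nonneg (le_of_lt hc0) (hv0 i)
  · exfalso
    set su := ∑ i ∈ Finset.Icc 1 (N+1), u i with hsu_def
    by_cases hsu0 : su = 0
    · obtain ⟨i0, hi0⟩ := hune
      exact hi0 (huniq u hsu hsu0 hLu i0)
    · set c := (∑ i ∈ Finset.Icc 1 (N+1), u' i) / su with hc_def
      set w : ℕ → ℝ := fun i => 1 * u' i + (-c) * u i with hw
      have hwall : ∀ i, w i = 0 := by
        apply huniq
        · intro i hi
          simp only [hw]
          rw [hsu i hi, hsu' i hi]; ring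
        · rw [hw, Finset.sum_add_distrib]
          simp only [one_mul]
          rw [← Finset.mul_sum, hc_def]
          field_simp
          rw [← hsu_def]; ring
        · intro j hj1 hjN
          rw [hw, Lw_lin, hLu j hj1 hjN, hLu' j hj1 hjN]
          ring
      obtain ⟨i0, hi0⟩ := hind c
      apply hi0
      have := hwall i0
      simp only [hw] at this
      linarith

noncomputable def Pmat' (n : ℕ) (g : ℕ → ℕ → ℕ) : Matrix (Fin (n+2)) (Fin (n+2)) ℝ :=
  Matrix.of fun i j =>
    if (i : ℕ) = 0 then (if (j : ℕ) = 0 then 0 else 1)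
    else if (j : ℕ) = 0 then 1
    else -(g (i : ℕ) (j : ℕ) : ℝ)

lemma fin_sum_split (n : ℕ) (F : Fin (n+2) → ℝ) :
    ∑ i : Fin (n+2), F i
      = F 0 + ∑ i ∈ Finset.Icc 1 (n+1), (if h : i < n + 2 then F ⟨i, h⟩ else 0) := by
  have h1 : ∑ i : Fin (n+2), F i
      = ∑ i ∈ Finset.range (n+2), (if h : i < n + 2 then F ⟨i, h⟩ else 0) := by
    rw [← Fin.sum_univ_eq_sum_range (fun i => if h : i < n + 2 then F ⟨i, h⟩ else 0) (n+2)]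
    refine Finset.sum_congr rfl fun i _ => ?_
    rw [dif_pos i.2]
  rw [h1]
  have h2 : Finset.range (n+2) = insert 0 (Finset.Icc 1 (n+1)) := by
    ext k
    simp only [Finset.mem_range, Finset.mem_insert, Finset.mem_Icc]
    omega
  rw [h2, Finset.sum_insert (by simp)]
  rw [dif_pos (by omega : (0:ℕ) < n + 2)]
  congr 1

lemma vec_split (n : ℕ) (x : Fin (n+2) → ℝ) (M : Matrix (Fin (n+2)) (Fin (n+2)) ℝ)
    (k : Fin (n+2)) :
    Matrix.vecMul x M k
      = x 0 * M 0 k + ∑ i ∈ Finset.Icc 1 (n+1),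
          (if h : i < n + 2 then x ⟨i, h⟩ * M ⟨i, h⟩ k else 0) := by
  have : Matrix.vecMul x M k = ∑ i : Fin (n+2), x i * M i k := by
    simp [Matrix.vecMul, dotProduct]
  rw [this, fin_sum_split n (fun i => x i * M i k)]

-- column equations for a vector annihilating / solving the system
lemma col_eq (n : ℕ) (g : ℕ → ℕ → ℕ) (x : Fin (n+2) → ℝ) (k : Fin (n+2)) (hk : (k : ℕ) ≠ 0) :
    Matrix.vecMul x (Pmat' n g) k
      = x 0 - ∑ i ∈ Finset.Icc 1 (n+1),
          (if h : i < n + 2 then x ⟨i, h⟩ else 0) * (g i (k : ℕ) : ℝ) := by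
  rw [vec_split]
  have h0 : Pmat' n (fun i j => g i j) 0 k = 1 := by
    simp [Pmat', hk]
    intro h; subst h; simp at hk
  rw [h0, mul_one]
  have : ∀ i ∈ Finset.Icc 1 (n+1),
      (if h : i < n + 2 then x ⟨i, h⟩ * Pmat' n g ⟨i, h⟩ k else 0)
      = -((if h : i < n + 2 then x ⟨i, h⟩ else 0) * (g i (k : ℕ) : ℝ)) := by
    intro i hi
    have hi' := Finset.mem_Icc.mp hi
    have h : i < n + 2 := by omega
    rw [dif_pos h, dif_pos h]
    have hP : Pmat' n g ⟨i, h⟩ k = -(g i (k : ℕ) : ℝ) := by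
      have hiz : ((⟨i, h⟩ : Fin (n+2)) : ℕ) ≠ 0 := by simp; omega
      simp [Pmat', hiz, hk]
      intro h; subst h; simp at hk
    rw [hP]; ring
  rw [Finset.sum_congr rfl this, Finset.sum_neg_distrib]
  ring

lemma col_eq0 (n : ℕ) (g : ℕ → ℕ → ℕ) (x : Fin (n+2) → ℝ) :
    Matrix.vecMul x (Pmat' n g) 0
      = ∑ i ∈ Finset.Icc 1 (n+1), (if h : i < n + 2 then x ⟨i, h⟩ else 0) := by
  rw [vec_split]
  have h0 : Pmat' n g 0 0 = 0 := by simp [Pmat']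
  rw [h0, mul_zero, zero_add]
  refine Finset.sum_congr rfl fun i hi => ?_
  have hi' := Finset.mem_Icc.mp hi
  have h : i < n + 2 := by omega
  rw [dif_pos h, dif_pos h]
  have hiz : ((⟨i, h⟩ : Fin (n+2)) : ℕ) ≠ 0 := by simp; omega
  simp [Pmat', hiz]

theorem stmt6 (n η : ℕ) (hn : 1 ≤ n) (hη : 1 ≤ η) (ℓ : ℕ → ℕ → ℕ)
    (hbound : ∀ i ≤ n, ∀ j ≤ n, ℓ i j ≤ η)
    (hds : ℓ 0 0 = 0) (hii : ∀ i, 1 ≤ i → i ≤ n → ℓ i i = 0)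
    (hmono : ∀ i j, 1 ≤ i → i ≤ j → j ≤ n → ℓ i 0 ≤ ℓ j 0)
    (hdet : (Pmat n η ℓ).det ≠ 0)
    (μ : Fin (n + 2) → ℝ)
    (hμ : Matrix.vecMul μ (Pmat n η ℓ) = fun k => if k = 0 then 1 else 0) :
    ∀ k : Fin (n + 2), 0 ≤ μ k := by
  classical
  set g : ℕ → ℕ → ℕ :=
    fun i j => fRank n η ℓ (Finset.Icc i n) (if j = n + 1 then ∅ else {j}) with hg
  have hPP : Pmat n η ℓ = Pmat' n g := rfl
  set ν : ℕ → ℝ :=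
    (fun i => if h : i < n + 2 then (if i = 0 then 0 else μ ⟨i, h⟩) else 0) with hν
  have hν_eq : ∀ i ∈ Finset.Icc 1 (n+1), (if h : i < n + 2 then μ ⟨i, h⟩ else 0) = ν i := by
    intro i hi
    have hi' := Finset.mem_Icc.mp hi
    have h2 : i < n + 2 := by omega
    simp only [hν]
    rw [dif_pos h2, dif_pos h2, if_neg (by omega : ¬ i = 0)]
  have hμk : ∀ k : Fin (n+2), Matrix.vecMul μ (Pmat' n g) k = if k = 0 then 1 else 0 := by
    intro k; rw [← hPP, hμ]
  -- the sum-to-one equation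
  have eq1 : ∑ i ∈ Finset.Icc 1 (n+1), ν i = 1 := by
    have h := hμk 0
    rw [col_eq0 n g μ] at h
    rw [← Finset.sum_congr rfl hν_eq]
    rw [h, if_pos rfl]
  -- column equations
  have eqj : ∀ j : ℕ, 1 ≤ j → j ≤ n + 1 →
      ∑ i ∈ Finset.Icc 1 (n+1), ν i * (g i j : ℝ) = μ 0 := by
    intro j hj1 hj2
    set k : Fin (n+2) := ⟨j, by omega⟩ with hk
    have hkv : (k : ℕ) = j := rfl
    have hkne : (k : ℕ) ≠ 0 := by omega
    have h := hμk k
    rw [col_eq n g μ k hkne] at h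
    rw [if_neg (by intro hh; rw [hh] at hkv; simp at hkv; omega)] at h
    have h2 : ∑ i ∈ Finset.Icc 1 (n+1),
        (if h : i < n + 2 then μ ⟨i, h⟩ else 0) * (g i (k:ℕ) : ℝ)
        = ∑ i ∈ Finset.Icc 1 (n+1), ν i * (g i j : ℝ) := by
      refine Finset.sum_congr rfl fun i hi => ?_
      rw [hν_eq i hi, hkv]
    rw [h2] at h
    linarith
  -- coefficients
  set r : ℕ → ℕ → ℝ := fun i j => (g i j : ℝ) - g i (n+1) with hr_def
  set δr : ℕ → ℝ := fun j => (g (j+1) (n+1) : ℝ) - g (j+1) j with hδ_def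
  have hgj : ∀ j, 1 ≤ j → j ≤ n → ∀ i, g i j = fRank n η ℓ (Finset.Icc i n) {j} := by
    intro j hj1 hjn i
    rw [hg]
    simp only
    rw [if_neg (by omega)]
  have hgtop : ∀ i, g i (n+1) = fRank n η ℓ (Finset.Icc i n) ∅ := by
    intro i; rw [hg]; simp
  have hr0 : ∀ i j, 1 ≤ i → i ≤ j → j ≤ n → 0 ≤ r i j := by
    intro i j h1 h2 h3
    rw [hr_def]
    simp only [sub_nonneg]
    rw [hgj j (by omega) h3 i, hgtop i]
    exact_mod_cast fact_R3 n η ℓ i j h1 h2 h3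
  have hδ0 : ∀ j, 1 ≤ j → j ≤ n → 0 ≤ δr j := by
    intro j h1 h2
    rw [hδ_def]
    simp only [sub_nonneg]
    rw [hgj j h1 h2 (j+1), hgtop (j+1)]
    exact_mod_cast fact_R2 n η ℓ j h1 h2
  have hR1 : ∀ i j, 1 ≤ j → j + 2 ≤ i → i ≤ n + 1 → g i j = g i (n+1) := by
    intro i j h1 h2 h3
    rw [hgj j h1 (by omega) i, hgtop i]
    exact fact_R1 n η ℓ hds hbound hmono i j h1 h2 h3
  -- the splitting identity
  have hsplit : ∀ (w : ℕ → ℝ) (j : ℕ), 1 ≤ j → j ≤ n →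
      ∑ i ∈ Finset.Icc 1 (n+1), w i * ((g i j : ℝ) - g i (n+1)) = Lw r δr j w := by
    intro w j hj1 hjn
    set f : ℕ → ℝ := fun i => w i * ((g i j : ℝ) - g i (n+1)) with hf
    have hIoc : ∀ m : ℕ, Finset.Icc 1 m = Finset.Ioc 0 m := fun m => Finset.Icc_add_one_left_eq_Ioc 0 m
    have hs1 : ∑ i ∈ Finset.Ioc 0 j, f i + ∑ i ∈ Finset.Ioc j (n+1), f i
        = ∑ i ∈ Finset.Ioc 0 (n+1), f i :=
      Finset.sum_Ioc_consecutive f (by omega) (by omega)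
    have hs2 : ∑ i ∈ Finset.Ioc j (j+1), f i + ∑ i ∈ Finset.Ioc (j+1) (n+1), f i
        = ∑ i ∈ Finset.Ioc j (n+1), f i :=
      Finset.sum_Ioc_consecutive f (by omega) (by omega)
    have h3 : ∑ i ∈ Finset.Ioc (j+1) (n+1), f i = 0 := by
      apply Finset.sum_eq_zero
      intro i hi
      have hi' := Finset.mem_Ioc.mp hi
      rw [hf]
      simp only
      rw [hR1 i j hj1 (by omega) (by omega)]
      ring
    have h4 : Finset.Ioc j (j+1) = {j+1} := Nat.Ioc_succ_singleton j
    have h5 : ∑ i ∈ Finset.Ioc j (j+1), f i = f (j+1) := by rw [h4, Finset.sum_singleton]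
    rw [hIoc (n+1), ← hs1, ← hs2, h5, h3]
    unfold Lw Rho
    rw [← hIoc j]
    have h6 : ∑ i ∈ Finset.Icc 1 j, w i * r i j = ∑ i ∈ Finset.Icc 1 j, f i := by
      refine Finset.sum_congr rfl fun i _ => rfl
    rw [h6, hf]
    simp only [hδ_def]
    ring
  -- constraints for ν
  have hLν : ∀ j, 1 ≤ j → j ≤ n → Lw r δr j ν = 0 := by
    intro j hj1 hjn
    rw [← hsplit ν j hj1 hjn]
    have hsub : ∑ i ∈ Finset.Icc 1 (n+1), ν i * ((g i j : ℝ) - g i (n+1))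
        = (∑ i ∈ Finset.Icc 1 (n+1), ν i * (g i j : ℝ))
          - ∑ i ∈ Finset.Icc 1 (n+1), ν i * (g i (n+1) : ℝ) := by
      rw [← Finset.sum_sub_distrib]
      refine Finset.sum_congr rfl fun i _ => by ring
    rw [hsub, eqj j hj1 (by omega), eqj (n+1) (by omega) le_rfl]
    ring
  -- uniqueness from invertibility
  have huniq : ∀ w : ℕ → ℝ, (∀ i, i = 0 ∨ n + 2 ≤ i → w i = 0) →
      (∑ i ∈ Finset.Icc 1 (n+1), w i = 0) →
      (∀ j, 1 ≤ j → j ≤ n → Lw r δr j w = 0) → ∀ i, w i = 0 := by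
    intro w hwsupp hwsum hwL
    set W : Fin (n+2) → ℝ :=
      (fun k => if (k : ℕ) = 0 then ∑ i ∈ Finset.Icc 1 (n+1), w i * (g i (n+1) : ℝ)
        else w (k : ℕ)) with hW
    have hWv : ∀ i ∈ Finset.Icc 1 (n+1), (if h : i < n + 2 then W ⟨i, h⟩ else 0) = w i := by
      intro i hi
      have hi' := Finset.mem_Icc.mp hi
      rw [dif_pos (by omega : i < n + 2)]
      simp only [hW]
      rw [if_neg (show ¬ ((⟨i, by omega⟩ : Fin (n+2)) : ℕ) = 0 by simp only [Fin.val_mk]; omega)]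
    have hW0 : Matrix.vecMul W (Pmat' n g) = 0 := by
      funext k
      by_cases hk : (k : ℕ) = 0
      · have hk0 : k = 0 := by
          apply Fin.ext; rw [hk]; rfl
        rw [hk0, col_eq0 n g W, Finset.sum_congr rfl hWv]
        rw [hwsum]; rfl
      · rw [col_eq n g W k hk, Finset.sum_congr rfl (fun i hi => by rw [hWv i hi])]
        have hWzero : W 0 = ∑ i ∈ Finset.Icc 1 (n+1), w i * (g i (n+1) : ℝ) := by
          rw [hW]; simp
        rw [hWzero]
        have hkle : (k : ℕ) ≤ n + 1 := by have := k.2; omega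
        by_cases hkn : (k : ℕ) = n + 1
        · rw [hkn]; simp
        · have hj1 : 1 ≤ (k : ℕ) := by omega
          have hjn : (k : ℕ) ≤ n := by omega
          have hdiff : (∑ i ∈ Finset.Icc 1 (n+1), w i * (g i ((k:ℕ)) : ℝ))
              - ∑ i ∈ Finset.Icc 1 (n+1), w i * (g i (n+1) : ℝ) = Lw r δr (k:ℕ) w := by
            rw [← hsplit w (k:ℕ) hj1 hjn, ← Finset.sum_sub_distrib]
            refine Finset.sum_congr rfl fun i _ => by ring
          have hz := hwL (k:ℕ) hj1 hjn
          rw [hz] at hdiff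
          simp only [Pi.zero_apply]
          linarith [hdiff]
    have hdet' : IsUnit (Pmat' n g).det := by
      rw [← hPP]
      exact isUnit_iff_ne_zero.mpr hdet
    have hWzero : W = 0 := by
      have h1 : W = Matrix.vecMul (Matrix.vecMul W (Pmat' n g)) (Pmat' n g)⁻¹ := by
        rw [Matrix.vecMul_vecMul, Matrix.mul_nonsing_inv _ hdet', Matrix.vecMul_one]
      rw [hW0, Matrix.zero_vecMul] at h1
      exact h1
    intro i
    by_cases hin : 1 ≤ i ∧ i ≤ n + 1
    · have h1 : w i = W ⟨i, by omega⟩ := by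
        have hne : ¬ ((⟨i, by omega⟩ : Fin (n+2)) : ℕ) = 0 := by
          simp only [Fin.val_mk]; omega
        rw [hW]
        exact (if_neg hne).symm
      rw [h1, hWzero]; rfl
    · exact hwsupp i (by omega)
  -- apply the key lemma
  have hνsupp : ∀ i, i = 0 ∨ n + 2 ≤ i → ν i = 0 := by
    intro i hi
    simp only [hν]
    rcases hi with hi | hi
    · subst hi; rw [dif_pos (by omega : (0:ℕ) < n+2), if_pos rfl]
    · rw [dif_neg (by omega)]
  have hν0 : ∀ i, 0 ≤ ν i := key n r δr hr0 hδ0 ν hνsupp eq1 hLν huniq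
  -- conclude
  intro k
  by_cases hk : (k : ℕ) = 0
  · have hk0 : k = 0 := by apply Fin.ext; rw [hk]; rfl
    rw [hk0]
    have e2 := eqj (n+1) (by omega) le_rfl
    rw [← e2]
    apply Finset.sum_nonneg
    intro i _
    exact mul_nonneg (hν0 i) (Nat.cast_nonneg _)
  · have h1 : ν (k : ℕ) = μ k := by
      have h2 : ν (k : ℕ) = μ ⟨(k : ℕ), k.2⟩ := by
        simp only [hν]
        rw [dif_pos k.2, if_neg hk]
      rw [h2]
    rw [← h1]
    exact hν0 _
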